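/- Let f be holomorphic on the unit disk, a ∈ (0,1), λ ∈ ℂ with |λ| < 1, and f(az + 1 - a) = λ f(z) for all z ∈ 𝔻. Then the radial limit of f at 1 is zero: lim_{r→1⁻} f(r) = 0. -/

import Mathlib

open Filter

/-- If `f ∘ φ_a = λ f` on 𝔻 with `|λ| < 1`, then the radial limit of `f` at `1`
is zero. -/
theorem radial_limit_zero (a : ℝ) (ha : a ∈ Set.Ioo (0:ℝ) 1)
    (f : ℂ → ℂ) (lam : ℂ) (hlam : ‖lam‖ < 1)
    (hf : DifferentiableOn ℂ f (Metric.ball (0:ℂ) 1))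
    (heq : ∀ z ∈ Metric.ball (0:ℂ) 1, f ((a:ℂ) * z + (1 - a)) = lam * f z) :
    Tendsto (fun r : ℝ => f r) (nhdsWithin 1 (Set.Iio (1:ℝ))) (nhds 0) := by
  obtain ⟨ha0, ha1⟩ := ha
  have hmem : ∀ s : ℝ, 0 ≤ s → s < 1 → (s : ℂ) ∈ Metric.ball (0:ℂ) 1 := by
    intro s h0 h1
    simp only [Metric.mem_ball, dist_zero_right, Complex.norm_real, Real.norm_eq_abs]
    rw [abs_of_nonneg h0]; exact h1
  -- iteration lemma
  have iter : ∀ n : ℕ, ∀ s : ℝ, 0 ≤ s → s < 1 →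
      f (((1 - a^n * (1 - s) : ℝ) : ℂ)) = lam^n * f s := by
    intro n
    induction n with
    | zero => intro s h0 h1; norm_num
    | succ n ih =>
      intro s h0 h1
      set u : ℝ := 1 - a^n * (1 - s) with hu
      have hpow : 0 < a^n := pow_pos ha0 n
      have hle1 : a^n ≤ 1 := pow_le_one₀ ha0.le ha1.le
      have hu0 : 0 ≤ u := by nlinarith
      have hu1 : u < 1 := by nlinarith
      have key : ((1 - a^(n+1) * (1 - s) : ℝ) : ℂ) = (a:ℂ) * (u:ℂ) + (1 - a) := by
        rw [hu]; push_cast; ring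
      rw [key, heq _ (hmem u hu0 hu1), ih s h0 h1, pow_succ]
      ring
  -- bound on the fundamental segment
  have hne : (0:ℝ) ∈ Set.Icc (0:ℝ) (1-a) := by constructor <;> linarith
  have hcont : ContinuousOn (fun s : ℝ => ‖f s‖) (Set.Icc 0 (1-a)) := by
    apply continuous_norm.comp_continuousOn
    apply hf.continuousOn.comp Complex.continuous_ofReal.continuousOn
    intro x hx
    exact hmem x hx.1 (by linarith [hx.2])
  obtain ⟨x₀, hx₀, hM⟩ := isCompact_Icc.exists_isMaxOn ⟨0, hne⟩ hcont
  set M := ‖f x₀‖ with hMdef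
  have hM0 : 0 ≤ M := norm_nonneg _
  rw [Metric.tendsto_nhdsWithin_nhds]
  intro ε hε
  obtain ⟨N, hN⟩ : ∃ N, (‖lam‖)^N * (M + 1) < ε := by
    have h := tendsto_pow_atTop_nhds_zero_of_lt_one (norm_nonneg lam) hlam
    have h2 : Tendsto (fun n : ℕ => (‖lam‖)^n * (M+1)) atTop (nhds 0) := by
      simpa using h.mul_const (M+1)
    exact (h2.eventually_lt_const hε).exists
  refine ⟨a^N, pow_pos ha0 N, ?_⟩
  intro r hr hdist
  obtain ⟨t, htdef⟩ : ∃ t : ℝ, t = 1 - r := ⟨_, rfl⟩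
  have ht0 : 0 < t := by rw [htdef]; linarith [Set.mem_Iio.mp hr]
  have htN : t < a^N := by
    rw [Real.dist_eq, abs_sub_comm, abs_of_nonneg (by linarith : (0:ℝ) ≤ 1 - r)] at hdist
    linarith
  have h_ex : ∃ n : ℕ, a^n < t := exists_pow_lt_of_lt_one ht0 ha1
  have hspec : a ^ Nat.find h_ex < t := Nat.find_spec h_ex
  have hNn₀ : N < Nat.find h_ex := by
    by_contra h
    push_neg at h
    have : a^N ≤ a^(Nat.find h_ex) := pow_le_pow_of_le_one ha0.le ha1.le h
    linarith
  obtain ⟨n, hn⟩ : ∃ n, Nat.find h_ex = n + 1 :=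
    ⟨Nat.find h_ex - 1, (Nat.succ_pred_eq_of_pos (by omega)).symm⟩
  have hNn : N ≤ n := by omega
  have hn2 : t ≤ a^n := le_of_not_gt (Nat.find_min h_ex (by omega))
  have hn1 : a^(n+1) < t := by rw [hn] at hspec; exact hspec
  have hpow : 0 < a^n := pow_pos ha0 n
  obtain ⟨s, hsdef⟩ : ∃ s : ℝ, s = 1 - t / a^n := ⟨_, rfl⟩
  have hs0 : 0 ≤ s := by
    have : t / a^n ≤ 1 := (div_le_one hpow).mpr hn2
    rw [hsdef]; linarith
  have hs1 : s < 1 := by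
    have : 0 < t / a^n := div_pos ht0 hpow
    rw [hsdef]; linarith
  have hsa : s ≤ 1 - a := by
    have : a < t / a^n := by
      rw [lt_div_iff₀ hpow]
      calc a * a^n = a^(n+1) := by ring
        _ < t := hn1
    rw [hsdef]; linarith
  have hrs : r = 1 - a^n * (1 - s) := by
    rw [hsdef, htdef]
    field_simp
    ring
  have hfr : f r = lam^n * f s := by
    rw [hrs]; exact iter n s hs0 hs1
  rw [dist_zero_right, hfr]
  have hfs : ‖f s‖ ≤ M := hM ⟨hs0, hsa⟩
  have hlampow : (‖lam‖)^n ≤ (‖lam‖)^N :=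
    pow_le_pow_of_le_one (norm_nonneg lam) hlam.le hNn
  have hlamn : 0 ≤ (‖lam‖)^n := pow_nonneg (norm_nonneg lam) n
  calc ‖lam^n * f s‖ = (‖lam‖)^n * ‖f s‖ := by
        simp [norm_mul, norm_pow]
    _ ≤ (‖lam‖)^N * (M + 1) := by
        have h1 : (‖lam‖)^n * ‖f s‖ ≤ (‖lam‖)^n * (M+1) :=
          mul_le_mul_of_nonneg_left (by linarith) hlamn
        have h2 : (‖lam‖)^n * (M+1) ≤ (‖lam‖)^N * (M+1) :=
          mul_le_mul_of_nonneg_right hlampow (by linarith)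
        linarith
    _ < ε := hN
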